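/- Consider the density-dependent branching model in a Glauber environment: let m⁺ > 0, z⁻ > 0, and let a⁺, φ⁺, φ⁻, ψ⁻ : ℝ^d → [0,∞) be symmetric (f(−x) = f(x)) and integrable, with φ⁺ and a⁺ bounded and not almost everywhere zero. Fix α, β ∈ ℝ and for a two-component finite configuration η = (η⁺, η⁻) set M(η) = |η⁻| + m⁺ Σ_{x∈η⁺} e^{E_{φ⁺}(x, η⁺∖{x})} and c(η) = |η⁻| + m⁺ e^{e^α C(−φ⁺)} Σ_{x∈η⁺} e^{E_{φ⁺}(x, η⁺∖{x})} + e^{−β} z⁻ e^{e^β C(φ⁻)} Σ_{x∈η⁻} e^{−E_{φ⁻}(x, η⁻∖{x})} + e^{−α} e^{e^β C(ψ⁻)} ( Σ_{x∈η⁺} Σ_{y∈η⁺∖{x}} a⁺(x−y) e^{−E_{ψ⁻}(y, η⁻)} + e^α Σ_{x∈η⁺} ∫_{ℝ^d} a⁺(x−y) e^{−E_{ψ⁻}(y, η⁻)} dy ), where C(−φ⁺) := ∫_{ℝ^d} (e^{φ⁺(y)} − 1) dy. Assume there exist constants ϑ > 0 and b ≥ 0 such that Σ_{x∈η⁺}Σ_{y∈η⁺∖{x}}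 a⁺(x−y) ≤ ϑ Σ_{x∈η⁺}Σ_{y∈η⁺∖{x}} φ⁺(x−y) + b|η⁺| for every finite η⁺ ⊂ ℝ^d, and that e^β > z⁻ exp(e^β C(φ⁻)) and 2 > e^{e^α C(−φ⁺)} + (max{⟨a⁺⟩ + b e^{−α}, ϑ e^{−α}} / m⁺) · e^{e^β C(ψ⁻)}. Then there exists a constant a ∈ (0,2) such that c(η) ≤ a·M(η) for every two-component finite configuration η = (η⁺, η⁻). -/

import Mathlib

open MeasureTheory Real Finset

/-- Density dependent branching in Glauber environment (Theorem 5.7 of the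
paper): under the stated domination and parameter conditions there is a
constant `a ∈ (0,2)` such that `c(α,β;η) ≤ a · M(η)` for every two-component
finite configuration `η = (η⁺, η⁻)` (a pair of disjoint finite subsets of
`ℝ^d`). Here `E_φ(x,η) = ∑_{y∈η} φ(x−y)`, `C(φ) = ∫ |e^{−φ} − 1|` and
`C(−φ⁺) = ∫ (e^{φ⁺} − 1)`. -/
theorem statement10 (d : ℕ) (hd : 1 ≤ d)
    (mp zm : ℝ) (hmp : 0 < mp) (hzm : 0 < zm)
    (ap φp φm ψm : (Fin d → ℝ) → ℝ)
    (hap0 : ∀ x, 0 ≤ ap x) (hφp0 : ∀ x, 0 ≤ φp x)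
    (hφm0 : ∀ x, 0 ≤ φm x) (hψm0 : ∀ x, 0 ≤ ψm x)
    (hapsym : ∀ x, ap (-x) = ap x) (hφpsym : ∀ x, φp (-x) = φp x)
    (hφmsym : ∀ x, φm (-x) = φm x) (hψmsym : ∀ x, ψm (-x) = ψm x)
    (hapint : Integrable ap) (hφpint : Integrable φp)
    (hφmint : Integrable φm) (hψmint : Integrable ψm)
    (hapbdd : ∃ C, ∀ x, ap x ≤ C) (hφpbdd : ∃ C, ∀ x, φp x ≤ C)
    (hapne : ¬ (ap =ᵐ[volume] 0)) (hφpne : ¬ (φp =ᵐ[volume] 0))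
    (α β : ℝ) (ϑ b : ℝ) (hϑ : 0 < ϑ) (hb : 0 ≤ b)
    (hap_dom : ∀ η : Finset (Fin d → ℝ),
      ∑ x ∈ η, ∑ y ∈ η.erase x, ap (x - y) ≤
        ϑ * ∑ x ∈ η, ∑ y ∈ η.erase x, φp (x - y) + b * η.card)
    (hzm' : exp β > zm * exp (exp β * ∫ x, |exp (-(φm x)) - 1|))
    (hmain : 2 > exp (exp α * ∫ x, (exp (φp x) - 1)) +
        max ((∫ x, ap x) + b * exp (-α)) (ϑ * exp (-α)) / mp *
          exp (exp β * ∫ x, |exp (-(ψm x)) - 1|)) :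
    ∃ a : ℝ, 0 < a ∧ a < 2 ∧
      ∀ ηp ηm : Finset (Fin d → ℝ), Disjoint ηp ηm →
        (ηm.card : ℝ) +
          mp * exp (exp α * ∫ x, (exp (φp x) - 1)) *
            (∑ x ∈ ηp, exp (∑ y ∈ ηp.erase x, φp (x - y))) +
          exp (-β) * zm * exp (exp β * ∫ x, |exp (-(φm x)) - 1|) *
            (∑ x ∈ ηm, exp (-(∑ y ∈ ηm.erase x, φm (x - y)))) +
          exp (-α) * exp (exp β * ∫ x, |exp (-(ψm x)) - 1|) *
            ((∑ x ∈ ηp, ∑ y ∈ ηp.erase x,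
                ap (x - y) * exp (-(∑ w ∈ ηm, ψm (y - w)))) +
              exp α * ∑ x ∈ ηp, ∫ y : Fin d → ℝ,
                ap (x - y) * exp (-(∑ w ∈ ηm, ψm (y - w)))) ≤
        a * ((ηm.card : ℝ) +
          mp * (∑ x ∈ ηp, exp (∑ y ∈ ηp.erase x, φp (x - y)))) := by

  set Iφ := ∫ x, (exp (φp x) - 1) with hIφdef
  set Km := exp (exp β * ∫ x, |exp (-(φm x)) - 1|) with hKmdef
  set Kψ := exp (exp β * ∫ x, |exp (-(ψm x)) - 1|) with hKψdef
  set Kφ := exp (exp α * Iφ) with hKφdef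
  set m := max ((∫ x, ap x) + b * exp (-α)) (ϑ * exp (-α)) with hmdef
  set θ := exp (-β) * zm * Km with hθdef
  have hθpos : 0 < θ := by
    have := exp_pos (-β); have := exp_pos (exp β * ∫ x, |exp (-(φm x)) - 1|)
    positivity
  have hθlt : θ < 1 := by
    have hθeq : θ = zm * Km / exp β := by rw [hθdef, exp_neg]; ring
    rw [hθeq]
    exact (div_lt_one (exp_pos β)).mpr hzm'
  have hKψpos : 0 < Kψ := exp_pos _
  have hmpos : 0 < m := lt_of_lt_of_le (by positivity) (le_max_right _ _)
  have hapI : 0 ≤ ∫ x, ap x := integral_nonneg hap0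
  refine ⟨max (1 + θ) (Kφ + m / mp * Kψ), lt_of_lt_of_le (by linarith) (le_max_left _ _),
    max_lt (by linarith) (by linarith [hmain]), ?_⟩
  intro ηp ηm _
  set a := max (1 + θ) (Kφ + m / mp * Kψ) with hadef
  set S := ∑ x ∈ ηp, exp (∑ y ∈ ηp.erase x, φp (x - y)) with hSdef
  set N := (ηm.card : ℝ) with hNdef
  set P := ∑ x ∈ ηp, ∑ y ∈ ηp.erase x, φp (x - y) with hPdef
  have hSnn : 0 ≤ S := sum_nonneg fun x _ => (exp_pos _).le
  have hNnn : 0 ≤ N := Nat.cast_nonneg _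
  have hPnn : 0 ≤ P := sum_nonneg fun x _ => sum_nonneg fun y _ => hφp0 _
  have hnnn : (0:ℝ) ≤ (ηp.card : ℝ) := Nat.cast_nonneg _
  -- P + |ηp| ≤ S
  have hPS : P + (ηp.card : ℝ) ≤ S := by
    have h1 : P + (ηp.card : ℝ) = ∑ x ∈ ηp, ((∑ y ∈ ηp.erase x, φp (x - y)) + 1) := by
      rw [sum_add_distrib]; simp [hPdef]
    rw [h1, hSdef]
    exact sum_le_sum fun x _ => add_one_le_exp _
  -- Tm ≤ N
  have hTm : (∑ x ∈ ηm, exp (-(∑ y ∈ ηm.erase x, φm (x - y)))) ≤ N := by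
    calc (∑ x ∈ ηm, exp (-(∑ y ∈ ηm.erase x, φm (x - y))))
        ≤ ∑ _x ∈ ηm, (1:ℝ) := sum_le_sum fun x _ =>
          exp_le_one_iff.mpr (neg_nonpos.mpr (sum_nonneg fun y _ => hφm0 _))
      _ = N := by simp [hNdef]
  -- A ≤ ϑ P + b n
  have hAle : (∑ x ∈ ηp, ∑ y ∈ ηp.erase x, ap (x - y) * exp (-(∑ w ∈ ηm, ψm (y - w))))
      ≤ ϑ * P + b * (ηp.card : ℝ) := by
    calc (∑ x ∈ ηp, ∑ y ∈ ηp.erase x, ap (x - y) * exp (-(∑ w ∈ ηm, ψm (y - w))))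
        ≤ ∑ x ∈ ηp, ∑ y ∈ ηp.erase x, ap (x - y) := by
          refine sum_le_sum fun x _ => sum_le_sum fun y _ => ?_
          exact mul_le_of_le_one_right (hap0 _)
            (exp_le_one_iff.mpr (neg_nonpos.mpr (sum_nonneg fun w _ => hψm0 _)))
      _ ≤ ϑ * P + b * (ηp.card : ℝ) := hap_dom ηp
  -- B ≤ n * ∫ ap
  have hBle : (∑ x ∈ ηp, ∫ y : Fin d → ℝ, ap (x - y) * exp (-(∑ w ∈ ηm, ψm (y - w))))
      ≤ (ηp.card : ℝ) * ∫ x, ap x := by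
    calc (∑ x ∈ ηp, ∫ y : Fin d → ℝ, ap (x - y) * exp (-(∑ w ∈ ηm, ψm (y - w))))
        ≤ ∑ _x ∈ ηp, ∫ x, ap x := by
          refine sum_le_sum fun x _ => ?_
          have h2 : (∫ y : Fin d → ℝ, ap (x - y) * exp (-(∑ w ∈ ηm, ψm (y - w))))
              ≤ ∫ y : Fin d → ℝ, ap (x - y) := by
            refine integral_mono_of_nonneg ?_ (hapint.comp_sub_left x) ?_
            · filter_upwards with y
              have := hap0 (x - y); have := exp_pos (-(∑ w ∈ ηm, ψm (y - w))); positivity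
            · filter_upwards with y
              exact mul_le_of_le_one_right (hap0 _)
                (exp_le_one_iff.mpr (neg_nonpos.mpr (sum_nonneg fun w _ => hψm0 _)))
          exact h2.trans (le_of_eq (integral_sub_left_eq_self ap volume x))
      _ = (ηp.card : ℝ) * ∫ x, ap x := by rw [sum_const, nsmul_eq_mul]
  -- combine the last block
  have hexpα : exp (-α) * exp α = 1 := by rw [← exp_add]; simp
  have hlast : exp (-α) * Kψ *
      ((∑ x ∈ ηp, ∑ y ∈ ηp.erase x, ap (x - y) * exp (-(∑ w ∈ ηm, ψm (y - w)))) +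
        exp α * ∑ x ∈ ηp, ∫ y : Fin d → ℝ, ap (x - y) * exp (-(∑ w ∈ ηm, ψm (y - w))))
      ≤ m * Kψ * S := by
    have hα1 : 0 < exp (-α) := exp_pos _
    have hα2 : 0 < exp α := exp_pos _
    have step1 : (∑ x ∈ ηp, ∑ y ∈ ηp.erase x, ap (x - y) * exp (-(∑ w ∈ ηm, ψm (y - w)))) +
        exp α * ∑ x ∈ ηp, ∫ y : Fin d → ℝ, ap (x - y) * exp (-(∑ w ∈ ηm, ψm (y - w)))
        ≤ (ϑ * P + b * (ηp.card : ℝ)) + exp α * ((ηp.card : ℝ) * ∫ x, ap x) := by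
      have := mul_le_mul_of_nonneg_left hBle hα2.le
      linarith
    have step2 : exp (-α) * ((ϑ * P + b * (ηp.card : ℝ)) + exp α * ((ηp.card : ℝ) * ∫ x, ap x))
        ≤ m * (P + (ηp.card : ℝ)) := by
      have e1 : exp (-α) * ((ϑ * P + b * (ηp.card : ℝ)) + exp α * ((ηp.card : ℝ) * ∫ x, ap x))
          = (ϑ * exp (-α)) * P + ((∫ x, ap x) + b * exp (-α)) * (ηp.card : ℝ) := by
        linear_combination ((ηp.card : ℝ) * ∫ x, ap x) * hexpα
      rw [e1]
      have h1 : ϑ * exp (-α) ≤ m := le_max_right _ _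
      have h2 : (∫ x, ap x) + b * exp (-α) ≤ m := le_max_left _ _
      have e2 : m * (P + (ηp.card : ℝ)) = m * P + m * (ηp.card : ℝ) := by ring
      linarith [mul_le_mul_of_nonneg_right h1 hPnn, mul_le_mul_of_nonneg_right h2 hnnn]
    have step3 : m * (P + (ηp.card : ℝ)) ≤ m * S := mul_le_mul_of_nonneg_left hPS hmpos.le
    calc exp (-α) * Kψ * ((∑ x ∈ ηp, ∑ y ∈ ηp.erase x, ap (x - y) * exp (-(∑ w ∈ ηm, ψm (y - w)))) +
        exp α * ∑ x ∈ ηp, ∫ y : Fin d → ℝ, ap (x - y) * exp (-(∑ w ∈ ηm, ψm (y - w))))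
        = Kψ * (exp (-α) * ((∑ x ∈ ηp, ∑ y ∈ ηp.erase x, ap (x - y) * exp (-(∑ w ∈ ηm, ψm (y - w)))) +
            exp α * ∑ x ∈ ηp, ∫ y : Fin d → ℝ, ap (x - y) * exp (-(∑ w ∈ ηm, ψm (y - w))))) := by ring
      _ ≤ Kψ * (m * S) := by
          refine mul_le_mul_of_nonneg_left ?_ hKψpos.le
          calc exp (-α) * ((∑ x ∈ ηp, ∑ y ∈ ηp.erase x, ap (x - y) * exp (-(∑ w ∈ ηm, ψm (y - w)))) +
              exp α * ∑ x ∈ ηp, ∫ y : Fin d → ℝ, ap (x - y) * exp (-(∑ w ∈ ηm, ψm (y - w))))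
              ≤ exp (-α) * ((ϑ * P + b * (ηp.card : ℝ)) + exp α * ((ηp.card : ℝ) * ∫ x, ap x)) :=
                mul_le_mul_of_nonneg_left step1 hα1.le
            _ ≤ m * (P + (ηp.card : ℝ)) := step2
            _ ≤ m * S := step3
      _ = m * Kψ * S := by ring
  -- final assembly
  have ha1 : 1 + θ ≤ a := le_max_left _ _
  have ha2 : Kφ + m / mp * Kψ ≤ a := le_max_right _ _
  have hdiv : m / mp * Kψ * mp = m * Kψ := by field_simp
  have hθTm : θ * (∑ x ∈ ηm, exp (-(∑ y ∈ ηm.erase x, φm (x - y)))) ≤ θ * N :=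
    mul_le_mul_of_nonneg_left hTm hθpos.le
  have hA1 : (1 + θ) * N ≤ a * N := mul_le_mul_of_nonneg_right ha1 hNnn
  have hA2 : (Kφ + m / mp * Kψ) * (mp * S) ≤ a * (mp * S) :=
    mul_le_mul_of_nonneg_right ha2 (mul_nonneg hmp.le hSnn)
  have hkey : (Kφ + m / mp * Kψ) * (mp * S) = mp * Kφ * S + m * Kψ * S := by
    field_simp
  have hexp1 : a * (N + mp * S) = a * N + a * (mp * S) := by ring
  have hexp2 : (1 + θ) * N = N + θ * N := by ring
  linarith [hθTm, hlast, hA1, hA2, hkey]
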